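/- Let g_1,...,g_J be strictly convex, differentiable, increasing with g_j(0)=0, and suppose the marginal costs are ordered: g'_1(z) ≤ g'_2(z) ≤ ... ≤ g'_J(z) for all z ≥ 0, with g'_j(0) = 0 for all j. Let z* be the unique optimizer of the Leader-Opt problem with budget G > 0 and K < J inspectors. Then all coordinates of z* are strictly positive, and the set A = {i : z*_i = max_j z*_j} equals {1,...,ℓ} for some ℓ with K+1 ≤ ℓ ≤ J, while B = {i : 0 < z*_i < max_j z*_j} equals {ℓ+1,...,J}. -/

import Mathlib

open Finset

/-- Sum of the `J - K` smallest coordinates of `z`: the infimum of sums over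
`(J-K)`-element subsets of coordinates. -/
noncomputable def sumSmallest (J K : ℕ) (z : Fin J → ℝ) : ℝ :=
  sInf {s : ℝ | ∃ S : Finset (Fin J), S.card = J - K ∧ s = ∑ i ∈ S, z i}

/-- Feasible stuffing vectors: nonnegative, total cost at most `G`. -/
def Feasible (J : ℕ) (g : Fin J → ℝ → ℝ) (G : ℝ) : Set (Fin J → ℝ) :=
  {z | (∀ j, 0 ≤ z j) ∧ ∑ j, g j (z j) ≤ G}

lemma sumSmallest_set_eq (J K : ℕ) (z : Fin J → ℝ) :
    {s : ℝ | ∃ S : Finset (Fin J), S.card = J - K ∧ s = ∑ i ∈ S, z i}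
      = ↑(((univ : Finset (Fin J)).powersetCard (J - K)).image (fun S => ∑ i ∈ S, z i)) := by
  ext s
  simp only [Set.mem_setOf_eq, coe_image, Set.mem_image, mem_coe, mem_powersetCard]
  constructor
  · rintro ⟨S, hc, rfl⟩; exact ⟨S, ⟨subset_univ S, hc⟩, rfl⟩
  · rintro ⟨S, ⟨_, hc⟩, rfl⟩; exact ⟨S, hc, rfl⟩

lemma sumSmallest_le (J K : ℕ) (z : Fin J → ℝ) (S : Finset (Fin J)) (hS : S.card = J - K) :
    sumSmallest J K z ≤ ∑ i ∈ S, z i := by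
  apply csInf_le
  · rw [sumSmallest_set_eq]; exact (Finset.finite_toSet _).bddBelow
  · exact ⟨S, hS, rfl⟩

lemma sumSmallest_exists_min (J K : ℕ) (z : Fin J → ℝ) :
    ∃ S : Finset (Fin J), S.card = J - K ∧ sumSmallest J K z = ∑ i ∈ S, z i := by
  obtain ⟨S0, -, hS0⟩ := Finset.exists_subset_card_eq (s := (univ : Finset (Fin J))) (n := J - K)
    (by simp [Nat.sub_le])
  have hne : {s : ℝ | ∃ S : Finset (Fin J), S.card = J - K ∧ s = ∑ i ∈ S, z i}.Nonempty :=
    ⟨∑ i ∈ S0, z i, S0, hS0, rfl⟩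
  have hfin : {s : ℝ | ∃ S : Finset (Fin J), S.card = J - K ∧ s = ∑ i ∈ S, z i}.Finite := by
    rw [sumSmallest_set_eq]; exact Finset.finite_toSet _
  have := hne.csInf_mem hfin
  exact this

lemma lt_sumSmallest (J K : ℕ) (z : Fin J → ℝ) (t : ℝ)
    (h : ∀ S : Finset (Fin J), S.card = J - K → t < ∑ i ∈ S, z i) :
    t < sumSmallest J K z := by
  obtain ⟨S, hc, he⟩ := sumSmallest_exists_min J K z
  rw [he]; exact h S hc

lemma sumSmallest_add_le (J K : ℕ) (z : Fin J → ℝ) (c : ℝ) :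
    sumSmallest J K z + ((J - K : ℕ) : ℝ) * c ≤ sumSmallest J K (fun i => z i + c) := by
  obtain ⟨S, hc, he⟩ := sumSmallest_exists_min J K (fun i => z i + c)
  rw [he, Finset.sum_add_distrib, Finset.sum_const, hc, nsmul_eq_mul]
  have := sumSmallest_le J K z S hc
  linarith

lemma sumSmallest_comp_equiv (J K : ℕ) (z : Fin J → ℝ) (σ : Equiv.Perm (Fin J)) :
    sumSmallest J K (z ∘ σ) = sumSmallest J K z := by
  unfold sumSmallest
  congr 1
  ext s
  simp only [Set.mem_setOf_eq, Function.comp]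
  constructor
  · rintro ⟨S, hc, rfl⟩
    refine ⟨S.image σ, by rw [Finset.card_image_of_injective _ σ.injective, hc], ?_⟩
    rw [Finset.sum_image (fun a _ b _ h => σ.injective h)]
  · rintro ⟨S, hc, rfl⟩
    refine ⟨S.image σ.symm, by rw [Finset.card_image_of_injective _ σ.symm.injective, hc], ?_⟩
    rw [Finset.sum_image (fun a _ b _ h => σ.symm.injective h)]
    simp

lemma small_cost (g : ℝ → ℝ) (hdiff : Differentiable ℝ g) (hg0 : g 0 = 0)
    (hd0 : deriv g 0 = 0) (c : ℝ) (hc : 0 < c) :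
    ∀ᶠ ε in nhdsWithin 0 (Set.Ioi 0), g ε ≤ c * ε := by
  have h := (hdiff 0).hasDerivAt
  rw [hd0, hasDerivAt_iff_tendsto_slope] at h
  have h2 : ∀ᶠ x in nhdsWithin 0 {(0:ℝ)}ᶜ, |slope g 0 x| < c := by
    have := Metric.tendsto_nhds.mp h c hc
    filter_upwards [this] with x hx
    simpa [Real.dist_eq] using hx
  have h3 : ∀ᶠ x in nhdsWithin 0 (Set.Ioi 0), |slope g 0 x| < c :=
    nhdsWithin_mono 0 (fun x (hx : x ∈ Set.Ioi 0) => ne_of_gt hx) h2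
  filter_upwards [h3, self_mem_nhdsWithin] with x hx (hx0 : x ∈ Set.Ioi 0)
  have hxpos : (0:ℝ) < x := hx0
  have : slope g 0 x = g x / x := by simp [slope_def_field, hg0]
  rw [this] at hx
  have := (abs_lt.mp hx).2
  calc g x = g x / x * x := by field_simp
    _ ≤ c * x := by nlinarith

/-- push: if budget slack, can strictly improve -/
lemma push (J K : ℕ) (g : Fin J → ℝ → ℝ) (G : ℝ) (hK : K < J)
    (hdiff : ∀ j, Differentiable ℝ (g j))
    (x : Fin J → ℝ) (hx0 : ∀ j, 0 ≤ x j) (hcost : ∑ j, g j (x j) < G) :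
    ∃ u ∈ Feasible J g G, sumSmallest J K x < sumSmallest J K u := by
  have hcont : Continuous fun ε : ℝ => ∑ j, g j (x j + ε) := by
    apply continuous_finset_sum
    intro j _
    exact (hdiff j).continuous.comp (continuous_const.add continuous_id)
  have h0 : ∀ᶠ ε in nhdsWithin 0 (Set.Ioi 0), ∑ j, g j (x j + ε) < G := by
    apply Filter.Eventually.filter_mono nhdsWithin_le_nhds
    have := hcont.continuousAt (x := (0:ℝ))
    exact this.eventually_lt continuousAt_const (by simpa using hcost)
  obtain ⟨ε, hfe, hεpos⟩ := (h0.and self_mem_nhdsWithin).exists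
  have hεpos : (0:ℝ) < ε := hεpos
  refine ⟨fun i => x i + ε, ⟨fun j => by have := hx0 j; dsimp only; linarith, hfe.le⟩, ?_⟩
  have h1 := sumSmallest_add_le J K x ε
  have h2 : (0:ℝ) < ((J - K : ℕ) : ℝ) * ε := by
    apply mul_pos _ hεpos
    have : 0 < J - K := Nat.sub_pos_of_lt hK
    exact_mod_cast Nat.cast_pos.mpr this
  linarith

/-- convex gain bound: g M - g b ≥ (g b / b) (M - b) -/
lemma convex_gain (g : ℝ → ℝ) (hconv : ConvexOn ℝ (Set.Ici 0) g) (hg0 : g 0 = 0)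
    (M b : ℝ) (hb : 0 < b) (hbM : b < M) :
    g b / b * (M - b) ≤ g M - g b := by
  have := hconv.slope_mono_adjacent (x := 0) (y := b) (z := M)
    (Set.self_mem_Ici) (Set.mem_Ici.mpr (by linarith)) hb hbM
  rw [hg0] at this
  simp only [sub_zero] at this
  have hMb : 0 < M - b := by linarith
  calc g b / b * (M - b) ≤ (g M - g b) / (M - b) * (M - b) := by
        apply mul_le_mul_of_nonneg_right this hMb.le
    _ = g M - g b := by field_simp

lemma maximizer_unique (J K : ℕ) (g : Fin J → ℝ → ℝ) (G : ℝ) (hK : K < J)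
    (hconv : ∀ j, StrictConvexOn ℝ (Set.Ici 0) (g j))
    (hdiff : ∀ j, Differentiable ℝ (g j))
    (z w : Fin J → ℝ) (hz : z ∈ Feasible J g G) (hw : w ∈ Feasible J g G)
    (hmax : ∀ u ∈ Feasible J g G, sumSmallest J K u ≤ sumSmallest J K z)
    (hweq : sumSmallest J K z ≤ sumSmallest J K w) : w = z := by
  by_contra hne
  obtain ⟨j0, hj0⟩ : ∃ j0, w j0 ≠ z j0 := by
    by_contra h; push_neg at h; exact hne (funext h)
  set m : Fin J → ℝ := fun i => (z i + w i) / 2 with hm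
  have hm0 : ∀ j, 0 ≤ m j := fun j => by
    have := hz.1 j; have := hw.1 j; simp only [hm]; linarith
  have hcost : ∑ j, g j (m j) < G := by
    have hlt : ∑ j, g j (m j) < ∑ j, (g j (z j) / 2 + g j (w j) / 2) := by
      apply Finset.sum_lt_sum
      · intro i _
        rcases eq_or_ne (z i) (w i) with he | he
        · simp only [hm]
          rw [he, show (w i + w i)/2 = w i by ring]
          linarith
        · have := (hconv i).2 (Set.mem_Ici.mpr (hz.1 i)) (Set.mem_Ici.mpr (hw.1 i)) he
            (by norm_num : (0:ℝ) < 1/2) (by norm_num : (0:ℝ) < 1/2) (by norm_num)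
          simp only [smul_eq_mul] at this
          simp only [hm]
          calc g i ((z i + w i)/2) = g i (1/2 * z i + 1/2 * w i) := by ring_nf
            _ ≤ 1/2 * g i (z i) + 1/2 * g i (w i) := this.le
            _ = g i (z i) / 2 + g i (w i) / 2 := by ring
      · refine ⟨j0, Finset.mem_univ _, ?_⟩
        have := (hconv j0).2 (Set.mem_Ici.mpr (hz.1 j0)) (Set.mem_Ici.mpr (hw.1 j0))
          (Ne.symm hj0) (by norm_num : (0:ℝ) < 1/2) (by norm_num : (0:ℝ) < 1/2) (by norm_num)
        simp only [smul_eq_mul] at this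
        simp only [hm]
        calc g j0 ((z j0 + w j0)/2) = g j0 (1/2 * z j0 + 1/2 * w j0) := by ring_nf
          _ < 1/2 * g j0 (z j0) + 1/2 * g j0 (w j0) := this
          _ = g j0 (z j0) / 2 + g j0 (w j0) / 2 := by ring
    have h2 : ∑ j, (g j (z j) / 2 + g j (w j) / 2) ≤ G := by
      rw [Finset.sum_add_distrib, ← Finset.sum_div, ← Finset.sum_div]
      have := hz.2; have := hw.2; linarith
    linarith
  have hsm : sumSmallest J K z ≤ sumSmallest J K m := by
    obtain ⟨S, hc, he⟩ := sumSmallest_exists_min J K m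
    rw [he]
    have h1 := sumSmallest_le J K z S hc
    have h2 := sumSmallest_le J K w S hc
    have : ∑ i ∈ S, m i = (∑ i ∈ S, z i) / 2 + (∑ i ∈ S, w i) / 2 := by
      have hcg : ∀ i ∈ S, m i = z i / 2 + w i / 2 := fun i _ => by simp only [hm]; ring
      rw [Finset.sum_congr rfl hcg, Finset.sum_add_distrib, ← Finset.sum_div, ← Finset.sum_div]
    rw [this]; linarith
  obtain ⟨u, hu, hlt⟩ := push J K g G hK hdiff m hm0 hcost
  exact absurd (hmax u hu) (by linarith)

lemma step2 (J K : ℕ) (g : Fin J → ℝ → ℝ) (G : ℝ)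
    (hK : K < J) (hG : 0 < G)
    (hconv : ∀ j, StrictConvexOn ℝ (Set.Ici 0) (g j))
    (hdiff : ∀ j, Differentiable ℝ (g j))
    (hmono : ∀ j, StrictMonoOn (g j) (Set.Ici (0 : ℝ)))
    (hzero : ∀ j, g j 0 = 0)
    (hd0 : ∀ j, deriv (g j) 0 = 0)
    (z : Fin J → ℝ)
    (hfeas : z ∈ Feasible J g G)
    (hcost : ∑ j, g j (z j) = G)
    (hmax : ∀ w ∈ Feasible J g G, sumSmallest J K w ≤ sumSmallest J K z) :
    ∀ i, 0 < z i := by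
  by_contra hcon
  push_neg at hcon
  obtain ⟨i, hi⟩ := hcon
  have hiz : z i = 0 := le_antisymm hi (hfeas.1 i)
  -- find a coordinate with positive cost
  have hex : ∃ m, 0 < g m (z m) := by
    by_contra h
    push_neg at h
    have : ∑ j, g j (z j) ≤ 0 := Finset.sum_nonpos fun j _ => h j
    linarith
  obtain ⟨m, hm⟩ := hex
  have hM : 0 < z m := by
    rcases lt_or_eq_of_le (hfeas.1 m) with h | h
    · exact h
    · rw [← h, hzero] at hm; linarith
  set M := z m with hMdef
  have hmZ : z m ≠ 0 := ne_of_gt hM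
  set Z : Finset (Fin J) := univ.filter (fun j => z j = 0) with hZdef
  have hiZ : i ∈ Z := by simp [hZdef, hiz]
  have hmnZ : m ∉ Z := by simp [hZdef, hmZ]
  -- the constant c
  set c : ℝ := g m (M / 2) / M with hcdef
  have hgM2 : 0 < g m (M / 2) := by
    have := hmono m (Set.self_mem_Ici) (Set.mem_Ici.mpr (by linarith : (0:ℝ) ≤ M / 2))
      (by linarith)
    rw [hzero m] at this; exact this
  have hc : 0 < c := div_pos hgM2 hM
  -- choose ε
  have hev : ∀ᶠ ε in nhdsWithin (0:ℝ) (Set.Ioi 0),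
      (∀ j : Fin J, g j ε ≤ c / (2 * (J + 1)) * ε) ∧ ε < M ∧ 0 < ε := by
    have h1 : ∀ᶠ ε in nhdsWithin (0:ℝ) (Set.Ioi 0), ∀ j : Fin J, g j ε ≤ c / (2 * (J + 1)) * ε :=
      Filter.eventually_all.mpr fun j => small_cost (g j) (hdiff j) (hzero j) (hd0 j)
        (c / (2 * (J + 1))) (by positivity)
    have h2 : ∀ᶠ ε in nhdsWithin (0:ℝ) (Set.Ioi 0), ε < M :=
      Filter.Eventually.filter_mono nhdsWithin_le_nhds (gt_mem_nhds hM)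
    have h3 : ∀ᶠ ε in nhdsWithin (0:ℝ) (Set.Ioi 0), (0:ℝ) < ε := self_mem_nhdsWithin
    filter_upwards [h1, h2, h3] with ε e1 e2 e3
    exact ⟨e1, e2, e3⟩
  obtain ⟨ε, hsmall, hεM, hεpos⟩ := hev.exists
  -- the perturbed vector
  set w : Fin J → ℝ := fun j => if j = m then z m - ε / 2 else if z j = 0 then ε else z j
    with hwdef
  have hwm : w m = M - ε / 2 := by simp [hwdef, hMdef]
  have hwZ : ∀ j ∈ Z, w j = ε := by
    intro j hj
    have hj0 : z j = 0 := by simpa [hZdef] using hj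
    have hjm : j ≠ m := fun h => hmZ (h ▸ hj0)
    simp [hwdef, hjm, hj0]
  have hwother : ∀ j, j ≠ m → j ∉ Z → w j = z j := by
    intro j h1 h2
    have : ¬ z j = 0 := by simpa [hZdef] using h2
    simp [hwdef, h1, this]
  have hwge : ∀ j, j ≠ m → z j ≤ w j := by
    intro j hj
    by_cases hz : j ∈ Z
    · rw [hwZ j hz]
      have : z j = 0 := by simpa [hZdef] using hz
      linarith
    · rw [hwother j hj hz]
  have hwnonneg : ∀ j, 0 ≤ w j := by
    intro j
    by_cases hj : j = m
    · rw [hj, hwm]; linarith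
    · exact le_trans (hfeas.1 j) (hwge j hj)
  -- feasibility
  have hb : (0:ℝ) < M - ε / 2 := by linarith
  have hfreed : c * (ε / 2) ≤ g m M - g m (M - ε / 2) := by
    have hgain := convex_gain (g m) (hconv m).convexOn (hzero m) M (M - ε / 2) hb (by linarith)
    have hb2 : M / 2 ≤ M - ε / 2 := by linarith
    have hmono2 : g m (M / 2) ≤ g m (M - ε / 2) :=
      (hmono m).monotoneOn (Set.mem_Ici.mpr (by linarith)) (Set.mem_Ici.mpr (by linarith)) hb2
    have hslope : c ≤ g m (M - ε / 2) / (M - ε / 2) := by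
      rw [hcdef, div_le_div_iff₀ hM hb]
      have h0 : 0 ≤ g m (M / 2) := hgM2.le
      nlinarith
    calc c * (ε / 2) ≤ g m (M - ε / 2) / (M - ε / 2) * (M - (M - ε / 2)) := by
          have : M - (M - ε / 2) = ε / 2 := by ring
          rw [this]
          exact mul_le_mul_of_nonneg_right hslope (by linarith)
      _ ≤ g m M - g m (M - ε / 2) := hgain
  have hZcost : ∑ j ∈ Z, g j ε ≤ c * (ε / 2) := by
    have h1 : ∑ j ∈ Z, g j ε ≤ ∑ _j ∈ Z, c / (2 * (J + 1)) * ε :=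
      Finset.sum_le_sum fun j _ => hsmall j
    rw [Finset.sum_const, nsmul_eq_mul] at h1
    have hcard : (Z.card : ℝ) ≤ J := by
      have := Finset.card_le_card (Finset.subset_univ Z)
      simp only [Finset.card_univ, Fintype.card_fin] at this
      exact_mod_cast this
    have : (Z.card : ℝ) * (c / (2 * (J + 1)) * ε) ≤ c * (ε / 2) := by
      have hJ1 : (0:ℝ) < J + 1 := by positivity
      rw [div_mul_eq_mul_div, mul_comm]
      rw [div_mul_eq_mul_div, div_le_iff₀ (by positivity)]
      have hce : (0:ℝ) ≤ c * ε := (mul_pos hc hεpos).le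
      nlinarith [mul_le_mul_of_nonneg_left hcard hce, hce]
    linarith
  have hwcost : ∑ j, g j (w j) ≤ G := by
    have hdiffsum : ∑ j, (g j (w j) - g j (z j)) = (g m (w m) - g m (z m)) + ∑ j ∈ Z, g j ε := by
      rw [← Finset.sum_subset (Finset.subset_univ (insert m Z))
        (fun x _ hx => by
          have hxm : x ≠ m := fun h => hx (by simp [h])
          have hxZ : x ∉ Z := fun h => hx (by simp [h])
          rw [hwother x hxm hxZ]; ring)]
      rw [Finset.sum_insert hmnZ]
      congr 1
      apply Finset.sum_congr rfl
      intro j hj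
      have hj0 : z j = 0 := by simpa [hZdef] using hj
      rw [hwZ j hj, hj0, hzero j]
      ring
    have : ∑ j, g j (w j) = ∑ j, g j (z j) + ((g m (w m) - g m (z m)) + ∑ j ∈ Z, g j ε) := by
      rw [← hdiffsum, ← Finset.sum_add_distrib]
      apply Finset.sum_congr rfl
      intro j _
      ring
    rw [this, hcost, hwm]
    have : g m (M - ε / 2) - g m (z m) + ∑ j ∈ Z, g j ε ≤ 0 := by
      rw [← hMdef]
      linarith
    linarith
  have hwfeas : w ∈ Feasible J g G := ⟨hwnonneg, hwcost⟩
  -- objective strictly improves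
  set t := sumSmallest J K z with htdef
  have himpr : t < sumSmallest J K w := by
    apply lt_sumSmallest
    intro S hS
    have hSne : S.Nonempty := by
      rw [← Finset.card_pos, hS]
      exact Nat.sub_pos_of_lt hK
    by_cases hmS : m ∈ S
    · by_cases hZS : ∃ i0 ∈ Z, i0 ∉ S
      · -- case C
        obtain ⟨i0, hi0Z, hi0S⟩ := hZS
        have hi0m : i0 ≠ m := fun h => hmnZ (h ▸ hi0Z)
        set S' := insert i0 (S.erase m) with hS'def
        have hi0e : i0 ∉ S.erase m := fun h => hi0S (Finset.mem_of_mem_erase h)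
        have hS'card : S'.card = J - K := by
          rw [hS'def, Finset.card_insert_of_notMem hi0e, Finset.card_erase_of_mem hmS, hS]
          have : 1 ≤ J - K := Nat.sub_pos_of_lt hK
          omega
        have hsum' : ∑ j ∈ S', z j = ∑ j ∈ S, z j - M := by
          rw [hS'def, Finset.sum_insert hi0e]
          have hi00 : z i0 = 0 := by simpa [hZdef] using hi0Z
          rw [hi00, Finset.sum_erase_eq_sub hmS]
          ring
        have h1 : t ≤ ∑ j ∈ S, z j - M := by
          rw [← hsum']; exact sumSmallest_le J K z S' hS'card
        have h2 : ∑ j ∈ S, z j - ε / 2 ≤ ∑ j ∈ S, w j := by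
          rw [← Finset.sum_erase_add S w hmS, ← Finset.sum_erase_add S z hmS, hwm, ← hMdef]
          have : ∑ j ∈ S.erase m, z j ≤ ∑ j ∈ S.erase m, w j :=
            Finset.sum_le_sum fun j hj => hwge j (Finset.ne_of_mem_erase hj)
          linarith
        linarith
      · -- case D : Z ⊆ S
        push_neg at hZS
        have hi0S : i ∈ S := hZS i hiZ
        have him : i ≠ m := fun h => (h ▸ hmZ) hiz
        have hie : i ∈ S.erase m := Finset.mem_erase.mpr ⟨him, hi0S⟩
        have h2 : ∑ j ∈ S, z j - ε / 2 + ε ≤ ∑ j ∈ S, w j := by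
          rw [← Finset.sum_erase_add S w hmS, ← Finset.sum_erase_add S z hmS, hwm, ← hMdef]
          have hterm : ∀ j ∈ S.erase m, z j ≤ w j :=
            fun j hj => hwge j (Finset.ne_of_mem_erase hj)
          have hssum : ∑ j ∈ S.erase m, (z j + (if j = i then ε else 0)) ≤
              ∑ j ∈ S.erase m, w j := by
            apply Finset.sum_le_sum
            intro j hj
            by_cases hji : j = i
            · subst hji
              rw [hwZ j hiZ, hiz]
              simp
            · simp only [hji, if_false, add_zero]
              exact hterm j hj
          rw [Finset.sum_add_distrib, Finset.sum_ite_eq' (S.erase m) i] at hssum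
          simp only [hie, if_true] at hssum
          linarith
        have h1 : t ≤ ∑ j ∈ S, z j := sumSmallest_le J K z S hS
        linarith
    · by_cases hSZ : ∃ j0 ∈ S, j0 ∈ Z
      · -- case A
        obtain ⟨j0, hj0S, hj0Z⟩ := hSZ
        have h2 : ∑ j ∈ S, z j + ε ≤ ∑ j ∈ S, w j := by
          have hssum : ∑ j ∈ S, (z j + (if j = j0 then ε else 0)) ≤ ∑ j ∈ S, w j := by
            apply Finset.sum_le_sum
            intro j hj
            by_cases hjj : j = j0
            · subst hjj
              rw [hwZ j hj0Z]
              have : z j = 0 := by simpa [hZdef] using hj0Z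
              rw [this]; simp
            · simp only [hjj, if_false, add_zero]
              exact hwge j (fun h => hmS (h ▸ hj))
          rw [Finset.sum_add_distrib, Finset.sum_ite_eq' S j0] at hssum
          simp only [hj0S, if_true] at hssum
          linarith
        have h1 : t ≤ ∑ j ∈ S, z j := sumSmallest_le J K z S hS
        linarith
      · -- case B
        push_neg at hSZ
        obtain ⟨a, haS⟩ := hSne
        have haZ : a ∉ Z := hSZ a haS
        have ha0 : 0 < z a := by
          rcases lt_or_eq_of_le (hfeas.1 a) with h | h
          · exact h
          · exact absurd (by simp [hZdef, ← h] : a ∈ Z) haZ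
        have hiS : i ∉ S := fun h => hSZ i h hiZ
        have hia : i ≠ a := fun h => hiS (h ▸ haS)
        have hie : i ∉ S.erase a := fun h => hiS (Finset.mem_of_mem_erase h)
        set S' := insert i (S.erase a) with hS'def
        have hS'card : S'.card = J - K := by
          rw [hS'def, Finset.card_insert_of_notMem hie, Finset.card_erase_of_mem haS, hS]
          have : 1 ≤ J - K := Nat.sub_pos_of_lt hK
          omega
        have hsum' : ∑ j ∈ S', z j = ∑ j ∈ S, z j - z a := by
          rw [hS'def, Finset.sum_insert hie, hiz, Finset.sum_erase_eq_sub haS]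
          ring
        have h1 : t ≤ ∑ j ∈ S, z j - z a := by
          rw [← hsum']; exact sumSmallest_le J K z S' hS'card
        have h2 : ∑ j ∈ S, w j = ∑ j ∈ S, z j := by
          apply Finset.sum_congr rfl
          intro j hj
          exact hwother j (fun h => hmS (h ▸ hj)) (hSZ j hj)
        rw [h2]
        linarith
  exact absurd (hmax w hwfeas) (not_le.mpr himpr)

lemma gdiff_mono (J : ℕ) (g : Fin J → ℝ → ℝ)
    (hdiff : ∀ j, Differentiable ℝ (g j))
    (horder : ∀ i j : Fin J, i ≤ j → ∀ x : ℝ, 0 ≤ x → deriv (g i) x ≤ deriv (g j) x)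
    (i j : Fin J) (hij : i ≤ j) :
    MonotoneOn (fun x => g j x - g i x) (Set.Ici (0:ℝ)) := by
  apply monotoneOn_of_deriv_nonneg (convex_Ici 0)
  · exact ((hdiff j).continuous.sub (hdiff i).continuous).continuousOn
  · intro x _
    exact ((hdiff j).differentiableAt.sub (hdiff i).differentiableAt).differentiableWithinAt
  · intro x hx
    rw [interior_Ici] at hx
    rw [deriv_fun_sub (hdiff j).differentiableAt (hdiff i).differentiableAt]
    have := horder i j hij x (le_of_lt hx)
    linarith

/-- argmax set is downward closed -/
lemma step3ii (J K : ℕ) (g : Fin J → ℝ → ℝ) (G : ℝ) (hK : K < J)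
    (hconv : ∀ j, StrictConvexOn ℝ (Set.Ici 0) (g j))
    (hdiff : ∀ j, Differentiable ℝ (g j))
    (horder : ∀ i j : Fin J, i ≤ j → ∀ x : ℝ, 0 ≤ x → deriv (g i) x ≤ deriv (g j) x)
    (z : Fin J → ℝ) (hfeas : z ∈ Feasible J g G)
    (hmax : ∀ w ∈ Feasible J g G, sumSmallest J K w ≤ sumSmallest J K z)
    (i j : Fin J) (hij : i ≤ j) : z j ≤ z i := by
  by_contra hcon
  push_neg at hcon  -- z i < z j
  have hine : i ≠ j := fun h => absurd (h ▸ hcon) (lt_irrefl _)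
  set w : Fin J → ℝ := z ∘ (Equiv.swap i j) with hwdef
  have hwi : w i = z j := by simp [hwdef]
  have hwj : w j = z i := by simp [hwdef]
  have hwother : ∀ k, k ≠ i → k ≠ j → w k = z k := by
    intro k h1 h2
    simp [hwdef, Equiv.swap_apply_of_ne_of_ne h1 h2]
  have hwnonneg : ∀ k, 0 ≤ w k := fun k => hfeas.1 _
  -- cost inequality via monotonicity of g j - g i
  have hkey : g i (z j) + g j (z i) ≤ g i (z i) + g j (z j) := by
    have hmono := gdiff_mono J g hdiff horder i j hij
    have h1 := hmono (Set.mem_Ici.mpr (hfeas.1 i)) (Set.mem_Ici.mpr (hfeas.1 j)) hcon.le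
    dsimp at h1
    linarith
  have hwcost : ∑ k, g k (w k) ≤ G := by
    have hdiffsum : ∑ k, (g k (w k) - g k (z k)) =
        (g i (w i) - g i (z i)) + (g j (w j) - g j (z j)) := by
      rw [← Finset.sum_subset (Finset.subset_univ (insert i {j}))
        (fun x _ hx => by
          have hxi : x ≠ i := fun h => hx (by simp [h])
          have hxj : x ≠ j := fun h => hx (by simp [h])
          rw [hwother x hxi hxj]; ring)]
      rw [Finset.sum_insert (by simp [hine]), Finset.sum_singleton]
    have heq : ∑ k, g k (w k) = ∑ k, g k (z k) +
        ((g i (w i) - g i (z i)) + (g j (w j) - g j (z j))) := by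
      rw [← hdiffsum, ← Finset.sum_add_distrib]
      exact Finset.sum_congr rfl fun k _ => by ring
    rw [heq, hwi, hwj]
    have := hfeas.2
    linarith
  have hwfeas : w ∈ Feasible J g G := ⟨hwnonneg, hwcost⟩
  have hweq : sumSmallest J K z ≤ sumSmallest J K w := by
    rw [hwdef, sumSmallest_comp_equiv]
  have := maximizer_unique J K g G hK hconv hdiff z w hfeas hwfeas hmax hweq
  have : w i = z i := by rw [this]
  rw [hwi] at this
  exact absurd this (ne_of_gt hcon)

lemma step3i (J K : ℕ) (g : Fin J → ℝ → ℝ) (G : ℝ) (hK : K < J)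
    (hdiff : ∀ j, Differentiable ℝ (g j))
    (hmono : ∀ j, StrictMonoOn (g j) (Set.Ici (0 : ℝ)))
    (z : Fin J → ℝ) (hfeas : z ∈ Feasible J g G)
    (hpos : ∀ i, 0 < z i)
    (hmax : ∀ w ∈ Feasible J g G, sumSmallest J K w ≤ sumSmallest J K z)
    (m : Fin J) (hm : ∀ j, z j ≤ z m) :
    K + 1 ≤ (univ.filter (fun k => z k = z m)).card := by
  by_contra hcon
  push_neg at hcon
  set M := z m with hMdef
  set A : Finset (Fin J) := univ.filter (fun k => z k = M) with hAdef
  have hAK : A.card ≤ K := by omega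
  have hmA : m ∈ A := by simp [hAdef, hMdef]
  have hAne : A.Nonempty := ⟨m, hmA⟩
  have hcompl_card : Aᶜ.card = J - A.card := by
    rw [Finset.card_compl]; simp
  have hcompl_ne : Aᶜ.Nonempty := by
    rw [← Finset.card_pos, hcompl_card]
    omega
  obtain ⟨m2, hm2c, hm2max⟩ := Finset.exists_max_image Aᶜ z hcompl_ne
  set M2 := z m2 with hM2def
  have hM2M : M2 < M := by
    have h1 : z m2 ≤ M := hm m2
    have h2 : z m2 ≠ M := by
      intro h
      exact absurd (by simp [hAdef, h]) (Finset.mem_compl.mp hm2c)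
    exact lt_of_le_of_ne h1 h2
  have hM2pos : 0 < M2 := hpos m2
  set δ : ℝ := (M - M2) / 2 with hδdef
  have hδpos : 0 < δ := by rw [hδdef]; linarith
  have hMδ : 0 < M - δ := by rw [hδdef]; linarith
  -- cost at ε = 0 is < G
  have hcost0 : ∑ k, g k (if k ∈ A then z k - δ else z k) < G := by
    have hlt : ∑ k, g k (if k ∈ A then z k - δ else z k) < ∑ k, g k (z k) := by
      apply Finset.sum_lt_sum
      · intro k _
        by_cases hk : k ∈ A
        · simp only [hk, if_true]
          have hzk : z k = M := by simpa [hAdef] using hk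
          apply le_of_lt
          apply hmono k (Set.mem_Ici.mpr (by rw [hzk]; linarith)) (Set.mem_Ici.mpr (hpos k).le)
          rw [hzk]; linarith
        · simp [hk]
      · refine ⟨m, Finset.mem_univ m, ?_⟩
        simp only [hmA, if_true]
        apply hmono m (Set.mem_Ici.mpr (by rw [← hMdef]; linarith)) (Set.mem_Ici.mpr (hpos m).le)
        rw [← hMdef]; linarith
    exact lt_of_lt_of_le hlt hfeas.2
  -- choose ε > 0 keeping feasibility
  have hcont : Continuous fun ε : ℝ => ∑ k, g k (if k ∈ A then z k - δ else z k + ε) := by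
    apply continuous_finset_sum
    intro k _
    by_cases hk : k ∈ A
    · simp only [hk, if_true]; exact continuous_const
    · simp only [hk, if_false]
      exact (hdiff k).continuous.comp (continuous_const.add continuous_id)
  have hev : ∀ᶠ ε in nhdsWithin (0:ℝ) (Set.Ioi 0),
      ∑ k, g k (if k ∈ A then z k - δ else z k + ε) < G := by
    apply Filter.Eventually.filter_mono nhdsWithin_le_nhds
    have h0 : (fun ε : ℝ => ∑ k, g k (if k ∈ A then z k - δ else z k + ε)) 0 < G := by
      simpa using hcost0
    exact (hcont.continuousAt).eventually_lt continuousAt_const h0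
  obtain ⟨ε, hfe, hεpos'⟩ := (hev.and self_mem_nhdsWithin).exists
  have hεpos : (0:ℝ) < ε := hεpos'
  set w : Fin J → ℝ := fun k => if k ∈ A then z k - δ else z k + ε with hwdef
  have hwfeas : w ∈ Feasible J g G := by
    constructor
    · intro k
      by_cases hk : k ∈ A
      · have hzk : z k = M := by simpa [hAdef] using hk
        simp only [hwdef, hk, if_true, hzk]
        linarith
      · have := hpos k
        simp only [hwdef, hk, if_false]
        linarith
    · exact le_of_lt hfe
  -- objective strictly improves
  set t := sumSmallest J K z with htdef
  have himpr : t < sumSmallest J K w := by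
    apply lt_sumSmallest
    intro S hS
    set n := (S ∩ A).card with hndef
    have hsplitw : ∑ k ∈ S, w k = ∑ k ∈ S ∩ A, w k + ∑ k ∈ S \ A, w k :=
      (Finset.sum_inter_add_sum_sdiff S A w).symm
    have hwA : ∀ k ∈ S ∩ A, w k = M - δ := by
      intro k hk
      have hkA : k ∈ A := (Finset.mem_inter.mp hk).2
      have hzk : z k = M := by simpa [hAdef] using hkA
      simp [hwdef, hkA, hzk]
    have hwB : ∀ k ∈ S \ A, w k = z k + ε := by
      intro k hk
      have hkA : k ∉ A := (Finset.mem_sdiff.mp hk).2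
      simp [hwdef, hkA]
    rw [hsplitw, Finset.sum_congr rfl hwA, Finset.sum_congr rfl hwB, Finset.sum_const,
      Finset.sum_add_distrib, Finset.sum_const, ← hndef, nsmul_eq_mul, nsmul_eq_mul]
    rcases Nat.eq_zero_or_pos n with hn0 | hnpos
    · -- n = 0 : S ∩ A empty, S \ A = S
      have hSA : S ∩ A = ∅ := Finset.card_eq_zero.mp (by rw [← hndef, hn0])
      have hSsub : S \ A = S := by
        rw [Finset.sdiff_eq_self_iff_disjoint, Finset.disjoint_left]
        intro x hxS hxA
        have : x ∈ S ∩ A := Finset.mem_inter.mpr ⟨hxS, hxA⟩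
        rw [hSA] at this
        exact Finset.notMem_empty x this
      have h1 : t ≤ ∑ k ∈ S, z k := sumSmallest_le J K z S hS
      rw [hn0, hSsub]
      have hcard : (S.card : ℝ) * ε > 0 := by
        apply mul_pos _ hεpos
        have : 0 < S.card := by rw [hS]; omega
        exact_mod_cast this
      rw [hS] at hcard ⊢
      push_cast
      push_cast at hcard
      linarith
    · -- n ≥ 1 : swap out S ∩ A
      have hcardT : n ≤ (Aᶜ \ S).card := by
        have h1 : (Aᶜ \ S).card + (Aᶜ ∩ S).card = Aᶜ.card := Finset.card_sdiff_add_card_inter Aᶜ S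
        have h2 : (S \ A).card + (S ∩ A).card = S.card := Finset.card_sdiff_add_card_inter S A
        have h3 : Aᶜ ∩ S = S \ A := by
          ext x; simp [Finset.mem_sdiff, Finset.mem_compl, and_comm]
        rw [h3] at h1
        rw [hS] at h2
        rw [hcompl_card] at h1
        omega
      obtain ⟨T, hTsub, hTcard⟩ := Finset.exists_subset_card_eq hcardT
      have hTdisj : Disjoint T (S \ A) := by
        apply Finset.disjoint_left.mpr
        intro x hxT hxS
        exact (Finset.mem_sdiff.mp (hTsub hxT)).2 (Finset.mem_sdiff.mp hxS).1
      set S' := T ∪ (S \ A) with hS'def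
      have hS'card : S'.card = J - K := by
        rw [hS'def, Finset.card_union_of_disjoint hTdisj, hTcard]
        have h2 : (S \ A).card + (S ∩ A).card = S.card := Finset.card_sdiff_add_card_inter S A
        rw [hS] at h2
        omega
      have hsum' : ∑ k ∈ S', z k = ∑ k ∈ T, z k + ∑ k ∈ S \ A, z k := by
        rw [hS'def, Finset.sum_union hTdisj]
      have h1 : t ≤ ∑ k ∈ T, z k + ∑ k ∈ S \ A, z k := by
        rw [← hsum']; exact sumSmallest_le J K z S' hS'card
      have hTbound : ∑ k ∈ T, z k ≤ (n : ℝ) * M2 := by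
        calc ∑ k ∈ T, z k ≤ ∑ _k ∈ T, M2 := by
              apply Finset.sum_le_sum
              intro k hk
              exact hm2max k (Finset.mem_sdiff.mp (hTsub hk)).1
          _ = (T.card : ℝ) * M2 := by rw [Finset.sum_const, nsmul_eq_mul]
          _ = (n : ℝ) * M2 := by rw [hTcard]
      have hzge : (0:ℝ) ≤ ∑ k ∈ S \ A, (z k) → True := fun _ => trivial
      have hεterm : (0:ℝ) ≤ ((S \ A).card : ℝ) * ε := by positivity
      have hnpos' : (1:ℝ) ≤ n := by exact_mod_cast hnpos
      have hδM2 : M - δ - M2 = δ := by rw [hδdef]; ring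
      nlinarith [hnpos', hδpos, hTbound, h1, hεterm]
  exact absurd (hmax w hwfeas) (not_le.mpr himpr)

/-- Under the cost-ordering assumption, the optimizer is strictly positive in
all coordinates, the argmax set is an initial segment `{0,…,ℓ-1}` of size at
least `K+1`, and the remaining coordinates are strictly between `0` and the max. -/
theorem stmt5 (J K : ℕ) (g : Fin J → ℝ → ℝ) (G : ℝ)
    (hK : K < J) (hG : 0 < G)
    (hconv : ∀ j, StrictConvexOn ℝ (Set.Ici 0) (g j))
    (hdiff : ∀ j, Differentiable ℝ (g j))
    (hmono : ∀ j, StrictMonoOn (g j) (Set.Ici (0 : ℝ)))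
    (hzero : ∀ j, g j 0 = 0)
    (horder : ∀ i j : Fin J, i ≤ j → ∀ x : ℝ, 0 ≤ x → deriv (g i) x ≤ deriv (g j) x)
    (hd0 : ∀ j, deriv (g j) 0 = 0)
    (z : Fin J → ℝ)
    (hfeas : z ∈ Feasible J g G)
    (hmax : ∀ w ∈ Feasible J g G, sumSmallest J K w ≤ sumSmallest J K z) :
    (∀ i, 0 < z i) ∧
    ∃ l : ℕ, K + 1 ≤ l ∧ l ≤ J ∧
      (∀ i : Fin J, ((∀ j, z j ≤ z i) ↔ (i : ℕ) < l)) ∧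
      (∀ i : Fin J, ((0 < z i ∧ ∃ j, z i < z j) ↔ l ≤ (i : ℕ))) := by
  -- budget is binding
  have hcostG : ∑ j, g j (z j) = G := by
    rcases lt_or_eq_of_le hfeas.2 with h | h
    · exfalso
      obtain ⟨u, hu, hlt⟩ := push J K g G hK hdiff z hfeas.1 h
      exact absurd (hmax u hu) (not_le.mpr hlt)
    · exact h
  have hpos : ∀ i, 0 < z i :=
    step2 J K g G hK hG hconv hdiff hmono hzero hd0 z hfeas hcostG hmax
  refine ⟨hpos, ?_⟩
  have hJpos : 0 < J := lt_of_le_of_lt (Nat.zero_le K) hK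
  have : Nonempty (Fin J) := ⟨⟨0, hJpos⟩⟩
  obtain ⟨m, -, hm'⟩ := Finset.exists_max_image (univ : Finset (Fin J)) z univ_nonempty
  have hm : ∀ j, z j ≤ z m := fun j => hm' j (mem_univ j)
  set M := z m with hMdef
  set A : Finset (Fin J) := univ.filter (fun k => z k = M) with hAdef
  have hanti : ∀ i j : Fin J, i ≤ j → z j ≤ z i :=
    fun i j hij => step3ii J K g G hK hconv hdiff horder z hfeas hmax i j hij
  have hmemA : ∀ i : Fin J, i ∈ A ↔ z i = M := fun i => by simp [hAdef]
  have hdc : ∀ i j : Fin J, i ≤ j → j ∈ A → i ∈ A := by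
    intro i j hij hj
    rw [hmemA] at hj ⊢
    have h1 := hanti i j hij
    have h2 := hm i
    exact le_antisymm h2 (hj ▸ h1)
  set l := A.card with hldef
  have hmem_iff : ∀ i : Fin J, i ∈ A ↔ (i : ℕ) < l := by
    intro i
    constructor
    · intro hi
      have hsub : Finset.Iic i ⊆ A := by
        intro k hk
        exact hdc k i (Finset.mem_Iic.mp hk) hi
      have := Finset.card_le_card hsub
      rw [Fin.card_Iic] at this
      omega
    · intro hi
      by_contra hiA
      have hsub : A ⊆ Finset.Iio i := by
        intro k hk
        rw [Finset.mem_Iio]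
        by_contra hki
        push_neg at hki  -- i ≤ k
        exact hiA (hdc i k hki hk)
      have := Finset.card_le_card hsub
      rw [Fin.card_Iio] at this
      omega
  refine ⟨l, ?_, ?_, ?_, ?_⟩
  · exact step3i J K g G hK hdiff hmono z hfeas hpos hmax m hm
  · rw [hldef]
    calc A.card ≤ (univ : Finset (Fin J)).card := Finset.card_le_card (subset_univ A)
      _ = J := by simp
  · intro i
    rw [← hmem_iff i, hmemA]
    constructor
    · intro h
      exact le_antisymm (hm i) (h m)
    · intro h j
      rw [h]; exact hm j
  · intro i
    rw [← not_lt, ← hmem_iff i, hmemA]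
    constructor
    · rintro ⟨-, j, hj⟩ hM
      have := hm j
      linarith [hM ▸ hj]
    · intro h
      refine ⟨hpos i, m, ?_⟩
      have h1 := hm i
      show z i < M
      exact lt_of_le_of_ne h1 h
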